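/- Let $T$ be a bounded operator on a Banach space $X$. The unilateral shift $B_T$ on $\ell^p(X,\mathbb{N})$ (or $c_0(X,\mathbb{N})$) is mixing if and only if for every non-empty open set $U\subseteq X$, the set $N_T(B_X(0,1),U) = \{n\ge 0 : T^n(B_X(0,1))\cap U\ne\emptyset\}$ is cofinite. In particular, if $T$ is mixing on $X$, then $B_T$ is mixing. -/

import Mathlib

open Filter Topology ENNReal

section Defs
variable {Y : Type*} [TopologicalSpace Y]

/-- A map is hypercyclic if some point has dense orbit. -/
def Hypercyclic (f : Y → Y) : Prop := ∃ y : Y, Dense (Set.range fun n : ℕ => f^[n] y)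

/-- Topological transitivity. -/
def TopologicallyTransitive (f : Y → Y) : Prop :=
  ∀ U V : Set Y, IsOpen U → IsOpen V → U.Nonempty → V.Nonempty →
    ∃ n : ℕ, (f^[n] '' U ∩ V).Nonempty

/-- Topological mixing: return sets of pairs of non-empty open sets are cofinite. -/
def TopologicallyMixing (f : Y → Y) : Prop :=
  ∀ U V : Set Y, IsOpen U → IsOpen V → U.Nonempty → V.Nonempty →
    ∃ N : ℕ, ∀ n ≥ N, (f^[n] '' U ∩ V).Nonempty

/-- Weak mixing: `f ⊕ f` is hypercyclic. -/
def WeaklyMixing (f : Y → Y) : Prop := Hypercyclic (fun q : Y × Y => (f q.1, f q.2))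

/-- Chaos in the sense of Devaney: hypercyclic with a dense set of periodic points. -/
def Chaotic (f : Y → Y) : Prop :=
  Hypercyclic f ∧ Dense {y : Y | ∃ d : ℕ, 1 ≤ d ∧ f^[d] y = y}

/-- Lower density of a set of natural numbers. -/
noncomputable def lowerDensity (A : Set ℕ) : ℝ :=
  Filter.liminf
    (fun N : ℕ => (∑ n ∈ Finset.range N, Set.indicator A (fun _ => (1 : ℝ)) n) / N)
    Filter.atTop

/-- Frequent hypercyclicity: some orbit visits every non-empty open set along a set of
positive lower density. -/
def FrequentlyHypercyclic (f : Y → Y) : Prop :=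
  ∃ y : Y, ∀ U : Set Y, IsOpen U → U.Nonempty → 0 < lowerDensity {n : ℕ | f^[n] y ∈ U}

end Defs

/-- The `c₀`-sum of a family of normed spaces, realised as a submodule of `lp E ∞`:
those bounded families whose norms tend to `0` along the cofinite filter. -/
noncomputable def c0Sum {ι : Type*} (E : ι → Type*) [∀ i, NormedAddCommGroup (E i)]
    [∀ i, NormedSpace ℝ (E i)] : Submodule ℝ (lp E ∞) where
  carrier := {x | Tendsto (fun i => ‖(x : ∀ i, E i) i‖) cofinite (nhds 0)}
  add_mem' := by
    intro a b ha hb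
    refine squeeze_zero (fun i => norm_nonneg _) (fun i => ?_) (by simpa using ha.add hb)
    simp only [lp.coeFn_add, Pi.add_apply]
    exact norm_add_le _ _
  zero_mem' := by
    simp only [Set.mem_setOf_eq, lp.coeFn_zero, Pi.zero_apply, norm_zero]
    exact tendsto_const_nhds
  smul_mem' := by
    intro c a ha
    have h : Tendsto (fun i => ‖c‖ * ‖(a : ∀ i, E i) i‖) cofinite (nhds 0) := by
      simpa using ha.const_mul ‖c‖
    refine squeeze_zero (fun i => norm_nonneg _) (fun i => ?_) h
    simp only [lp.coeFn_smul, Pi.smul_apply]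
    exact (norm_smul c _).le

/-- The identity, as a continuous linear map between equal members of a family of spaces. -/
def castL (E : ℤ → Type*) [∀ k, NormedAddCommGroup (E k)] [∀ k, NormedSpace ℝ (E k)]
    {j k : ℤ} (h : j = k) : E j →L[ℝ] E k := by
  subst h; exact ContinuousLinearMap.id ℝ (E j)

/-- The composite `T_{j,j+n} = T_{j+1} ∘ ⋯ ∘ T_{j+n} : E (j+n) → E j` (here `T k` denotes
the operator `E (k+1) → E k`). -/
noncomputable def iterComp {E : ℤ → Type*} [∀ k, NormedAddCommGroup (E k)]
    [∀ k, NormedSpace ℝ (E k)] (T : ∀ k : ℤ, E (k + 1) →L[ℝ] E k) :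
    ∀ (j : ℤ) (n : ℕ), E (j + n) →L[ℝ] E j
  | j, 0 => castL E (by simp)
  | j, (n + 1) => (iterComp T j n).comp ((T (j + n)).comp (castL E (by push_cast; ring)))


set_option maxHeartbeats 1600000

section Helpers

section Key
variable {X : Type*} [NormedAddCommGroup X] [NormedSpace ℝ X] (T : X →L[ℝ] X)

lemma iter_smul' (n : ℕ) (c : ℝ) (x : X) : (⇑T)^[n] (c • x) = c • (⇑T)^[n] x := by
  induction n generalizing x with
  | zero => simp
  | succ n ih =>
    rw [Function.iterate_succ_apply, map_smul, ih, ← Function.iterate_succ_apply]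

lemma iter_zero' (n : ℕ) : (⇑T)^[n] (0 : X) = 0 := Function.iterate_fixed (map_zero T) n

lemma mixing_cond (hT : TopologicallyMixing ⇑T) :
    ∀ U : Set X, IsOpen U → U.Nonempty →
      {n : ℕ | ¬ ((⇑T)^[n] '' Metric.ball (0 : X) 1 ∩ U).Nonempty}.Finite := by
  intro U hUo hUne
  obtain ⟨N, hN⟩ := hT (Metric.ball 0 1) U Metric.isOpen_ball hUo
    ⟨0, Metric.mem_ball_self one_pos⟩ hUne
  exact (Set.finite_Iio N).subset fun n hn => lt_of_not_ge fun h => hn (hN n h)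

lemma key {E : Type*} [NormedAddCommGroup E] [NormedSpace ℝ E]
    (coord : ℕ → E →L[ℝ] X) (hcoord : ∀ k (x : E), ‖coord k x‖ ≤ ‖x‖)
    (sing : ℕ → X →ₗ[ℝ] E) (hsing : ∀ k (a : X), ‖sing k a‖ ≤ ‖a‖)
    (hcs : ∀ j k (a : X), coord j (sing k a) = if j = k then a else 0)
    (hinj : ∀ x y : E, (∀ k, coord k x = coord k y) → x = y)
    (hdense : ∀ (u : E) (ε : ℝ), 0 < ε →
      ∃ s : Finset ℕ, ‖u - ∑ k ∈ s, sing k (coord k u)‖ < ε)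
    (B : E → E)
    (hB : ∀ (x : E) (k : ℕ), coord k (B x) = T (coord (k + 1) x)) :
    TopologicallyMixing B ↔
      ∀ U : Set X, IsOpen U → U.Nonempty →
        {n : ℕ | ¬ ((⇑T)^[n] '' Metric.ball (0 : X) 1 ∩ U).Nonempty}.Finite := by
  have hBn : ∀ (n : ℕ) (x : E) (k : ℕ), coord k (B^[n] x) = (⇑T)^[n] (coord (k + n) x) := by
    intro n
    induction n with
    | zero => intro x k; simp
    | succ n ih =>
      intro x k
      rw [Function.iterate_succ_apply, ih (B x) k, hB, ← Function.iterate_succ_apply,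
        Nat.add_assoc]
  constructor
  · intro hmix U hUo hUne
    obtain ⟨u, hu⟩ := hUne
    obtain ⟨N, hN⟩ := hmix (Metric.ball 0 1) ((coord 0) ⁻¹' U) Metric.isOpen_ball
      (hUo.preimage (coord 0).continuous) ⟨0, Metric.mem_ball_self one_pos⟩
      ⟨sing 0 u, by simp [Set.mem_preimage, hcs, hu]⟩
    refine (Set.finite_Iio N).subset fun n hn => ?_
    by_contra h
    obtain ⟨y, ⟨x, hx, rfl⟩, hy⟩ := hN n (le_of_not_gt h)
    refine hn ⟨(⇑T)^[n] (coord n x), ⟨coord n x, ?_, rfl⟩, ?_⟩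
    · rw [Metric.mem_ball, dist_zero_right]
      exact lt_of_le_of_lt (hcoord n x) (by simpa using hx)
    · have := hBn n x 0
      rw [Nat.zero_add] at this
      rw [← this]
      exact hy
  · intro hcof U V hUo hVo hUne hVne
    obtain ⟨u, hu⟩ := hUne
    obtain ⟨v, hv⟩ := hVne
    obtain ⟨εU, hεU, hUb⟩ := Metric.isOpen_iff.mp hUo u hu
    obtain ⟨εV, hεV, hVb⟩ := Metric.isOpen_iff.mp hVo v hv
    obtain ⟨s, hs⟩ := hdense u (εU / 2) (by positivity)
    obtain ⟨t, ht⟩ := hdense v (εV / 2) (by positivity)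
    set c : ℝ := (t.card : ℝ) + 1 with hc_def
    have hc : 0 < c := by positivity
    set lam : ℝ := εU / (2 * c) with hlam_def
    set δ : ℝ := εV / (2 * c) with hδ_def
    have hcancel : ∀ e : ℝ, c * (e / (2 * c)) = e / 2 := fun e => by
      field_simp
    have hlam : 0 < lam := by positivity
    have hδ : 0 < δ := by positivity
    -- exceptional sets
    have hF : ∀ k : ℕ, {n : ℕ | ¬ ((⇑T)^[n] '' Metric.ball (0 : X) 1 ∩
        Metric.ball (lam⁻¹ • coord k v) (lam⁻¹ * δ)).Nonempty}.Finite := by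
      intro k
      exact hcof (Metric.ball (lam⁻¹ • coord k v) (lam⁻¹ * δ)) Metric.isOpen_ball
        ⟨lam⁻¹ • coord k v, Metric.mem_ball_self (mul_pos (inv_pos.mpr hlam) hδ)⟩
    have hGfin : (⋃ k ∈ (t : Set ℕ), {n : ℕ | ¬ ((⇑T)^[n] '' Metric.ball (0 : X) 1 ∩
        Metric.ball (lam⁻¹ • coord k v) (lam⁻¹ * δ)).Nonempty}).Finite :=
      Set.Finite.biUnion t.finite_toSet fun k _ => hF k
    obtain ⟨N₀, hN₀⟩ := hGfin.bddAbove
    refine ⟨max (s.sup id + 1) (N₀ + 1), fun n hn => ?_⟩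
    have hns : ∀ j ∈ s, j < n := by
      intro j hj
      have h1 : j ≤ s.sup id := Finset.le_sup (f := id) hj
      have h2 : s.sup id + 1 ≤ n := le_trans (le_max_left _ _) hn
      omega
    have hnk : ∀ k ∈ t, ((⇑T)^[n] '' Metric.ball (0 : X) 1 ∩
        Metric.ball (lam⁻¹ • coord k v) (lam⁻¹ * δ)).Nonempty := by
      intro k hk
      by_contra h
      have hmem : n ∈ ⋃ k ∈ (t : Set ℕ), {n : ℕ | ¬ ((⇑T)^[n] '' Metric.ball (0 : X) 1 ∩
          Metric.ball (lam⁻¹ • coord k v) (lam⁻¹ * δ)).Nonempty} :=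
        Set.mem_biUnion hk h
      have := hN₀ hmem
      have h2 : N₀ + 1 ≤ n := le_trans (le_max_right _ _) hn
      omega
    -- choose the points a k
    have hex : ∀ k : ℕ, ∃ a : X, k ∈ t → ‖a‖ < lam ∧ ‖(⇑T)^[n] a - coord k v‖ < δ := by
      intro k
      by_cases hk : k ∈ t
      · obtain ⟨y, ⟨b, hb, rfl⟩, hy⟩ := hnk k hk
        refine ⟨lam • b, fun _ => ⟨?_, ?_⟩⟩
        · rw [norm_smul, Real.norm_eq_abs, abs_of_pos hlam]
          have hb1 : ‖b‖ < 1 := mem_ball_zero_iff.mp hb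
          exact mul_lt_of_lt_one_right hlam hb1
        · rw [iter_smul']
          have hy' : ‖(⇑T)^[n] b - lam⁻¹ • coord k v‖ < lam⁻¹ * δ := by
            rw [← dist_eq_norm]; exact hy
          have : lam • (⇑T)^[n] b - coord k v = lam • ((⇑T)^[n] b - lam⁻¹ • coord k v) := by
            rw [smul_sub, smul_inv_smul₀ hlam.ne']
          rw [this, norm_smul, Real.norm_eq_abs, abs_of_pos hlam]
          calc lam * ‖(⇑T)^[n] b - lam⁻¹ • coord k v‖ < lam * (lam⁻¹ * δ) := by
                exact mul_lt_mul_of_pos_left hy' hlam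
            _ = δ := by rw [← mul_assoc, mul_inv_cancel₀ hlam.ne', one_mul]
      · exact ⟨0, fun h => absurd h hk⟩
    choose a ha using hex
    set x : E := (∑ k ∈ s, sing k (coord k u)) + ∑ k ∈ t, sing (n + k) (a k) with hx_def
    set y : E := ∑ k ∈ t, sing k ((⇑T)^[n] (a k)) with hy_def
    -- x ∈ U
    have hxU : x ∈ U := by
      apply hUb
      rw [Metric.mem_ball, dist_eq_norm]
      have h1 : x - u = (∑ k ∈ s, sing k (coord k u) - u) + ∑ k ∈ t, sing (n + k) (a k) := by
        rw [hx_def]; abel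
      rw [h1]
      have h2 : ‖∑ k ∈ s, sing k (coord k u) - u‖ < εU / 2 := by
        rw [norm_sub_rev]; exact hs
      have h3 : ‖∑ k ∈ t, sing (n + k) (a k)‖ ≤ (t.card : ℝ) * lam := by
        calc ‖∑ k ∈ t, sing (n + k) (a k)‖ ≤ ∑ k ∈ t, ‖sing (n + k) (a k)‖ :=
              norm_sum_le _ _
          _ ≤ ∑ k ∈ t, lam := Finset.sum_le_sum fun k hk =>
              le_of_lt (lt_of_le_of_lt (hsing _ _) ((ha k hk).1))
          _ = (t.card : ℝ) * lam := by rw [Finset.sum_const, nsmul_eq_mul]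
      have h4 : (t.card : ℝ) * lam < εU / 2 := by
        have : (t.card : ℝ) < c := by rw [hc_def]; linarith
        have := mul_lt_mul_of_pos_right this hlam
        calc (t.card : ℝ) * lam < c * lam := this
          _ = εU / 2 := by rw [hlam_def]; exact hcancel εU
      calc ‖(∑ k ∈ s, sing k (coord k u) - u) + ∑ k ∈ t, sing (n + k) (a k)‖
          ≤ ‖∑ k ∈ s, sing k (coord k u) - u‖ + ‖∑ k ∈ t, sing (n + k) (a k)‖ :=
            norm_add_le _ _
        _ < εU / 2 + εU / 2 := by linarith
        _ = εU := by ring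
    -- B^[n] x = y
    have hyx : B^[n] x = y := by
      apply hinj
      intro j
      rw [hBn n x j]
      have hcx : coord (j + n) x = if j ∈ t then a j else 0 := by
        rw [hx_def, map_add, map_sum, map_sum]
        have e1 : ∑ k ∈ s, coord (j + n) (sing k (coord k u)) = 0 := by
          refine Finset.sum_eq_zero fun k hk => ?_
          rw [hcs, if_neg]
          have := hns k hk; omega
        have e2 : ∑ k ∈ t, coord (j + n) (sing (n + k) (a k)) =
            if j ∈ t then a j else 0 := by
          have e3 : ∀ k ∈ t, coord (j + n) (sing (n + k) (a k)) =
              if j = k then a k else 0 := by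
            intro k _
            rw [hcs]
            exact if_congr (by omega) rfl rfl
          rw [Finset.sum_congr rfl e3, Finset.sum_ite_eq]
        rw [e1, e2, zero_add]
      rw [hcx, hy_def, map_sum]
      have e4 : ∀ k ∈ t, coord j (sing k ((⇑T)^[n] (a k))) =
          if j = k then (⇑T)^[n] (a k) else 0 := fun k _ => hcs _ _ _
      rw [Finset.sum_congr rfl e4, Finset.sum_ite_eq]
      by_cases hj : j ∈ t
      · rw [if_pos hj, if_pos hj]
      · rw [if_neg hj, if_neg hj, iter_zero']
    -- y ∈ V
    have hyV : y ∈ V := by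
      apply hVb
      rw [Metric.mem_ball, dist_eq_norm]
      have h1 : y - v = (∑ k ∈ t, sing k ((⇑T)^[n] (a k) - coord k v)) +
          (∑ k ∈ t, sing k (coord k v) - v) := by
        rw [hy_def]
        have : ∑ k ∈ t, sing k ((⇑T)^[n] (a k) - coord k v) =
            ∑ k ∈ t, sing k ((⇑T)^[n] (a k)) - ∑ k ∈ t, sing k (coord k v) := by
          rw [← Finset.sum_sub_distrib]
          exact Finset.sum_congr rfl fun k _ => map_sub _ _ _
        rw [this]; abel
      rw [h1]
      have h2 : ‖∑ k ∈ t, sing k (coord k v) - v‖ < εV / 2 := by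
        rw [norm_sub_rev]; exact ht
      have h3 : ‖∑ k ∈ t, sing k ((⇑T)^[n] (a k) - coord k v)‖ ≤ (t.card : ℝ) * δ := by
        calc ‖∑ k ∈ t, sing k ((⇑T)^[n] (a k) - coord k v)‖
            ≤ ∑ k ∈ t, ‖sing k ((⇑T)^[n] (a k) - coord k v)‖ := norm_sum_le _ _
          _ ≤ ∑ k ∈ t, δ := Finset.sum_le_sum fun k hk =>
              le_of_lt (lt_of_le_of_lt (hsing _ _) ((ha k hk).2))
          _ = (t.card : ℝ) * δ := by rw [Finset.sum_const, nsmul_eq_mul]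
      have h4 : (t.card : ℝ) * δ < εV / 2 := by
        have hlt : (t.card : ℝ) < c := by rw [hc_def]; linarith
        calc (t.card : ℝ) * δ < c * δ := mul_lt_mul_of_pos_right hlt hδ
          _ = εV / 2 := by rw [hδ_def]; exact hcancel εV
      calc ‖(∑ k ∈ t, sing k ((⇑T)^[n] (a k) - coord k v)) +
            (∑ k ∈ t, sing k (coord k v) - v)‖
          ≤ ‖∑ k ∈ t, sing k ((⇑T)^[n] (a k) - coord k v)‖ +
            ‖∑ k ∈ t, sing k (coord k v) - v‖ := norm_add_le _ _
        _ < εV / 2 + εV / 2 := by linarith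
        _ = εV := by ring
    exact ⟨y, ⟨x, hxU, hyx⟩, hyV⟩
end Key

section LpInst
variable {X : Type*} [NormedAddCommGroup X] [NormedSpace ℝ X]
variable (p : ℝ≥0∞) [Fact (1 ≤ p)]

lemma hp0 : p ≠ 0 := by
  have : (1 : ℝ≥0∞) ≤ p := Fact.out
  intro h; rw [h] at this; exact absurd this (by simp)

/-- single as an element evaluation. -/
lemma single_apply_ite (k : ℕ) (a : X) (j : ℕ) :
    (lp.single p k a : ℕ → X) j = if j = k then a else 0 := by
  by_cases h : j = k
  · subst h; rw [if_pos rfl]; exact lp.single_apply_self _ _ _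
  · rw [if_neg h]; exact lp.single_apply_ne _ _ _ h

/-- The coordinate functional. -/
noncomputable def coordCLM (k : ℕ) : lp (fun _ : ℕ => X) p →L[ℝ] X :=
  LinearMap.mkContinuous
    { toFun := fun x => (x : ℕ → X) k
      map_add' := fun x y => congrFun (lp.coeFn_add x y) k
      map_smul' := fun c x => congrFun (lp.coeFn_smul c x) k }
    1 (fun x => by simpa using lp.norm_apply_le_norm (hp0 p) x k)

@[simp] lemma coordCLM_apply (k : ℕ) (x : lp (fun _ : ℕ => X) p) :
    coordCLM p k x = (x : ℕ → X) k := rfl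

/-- single as a linear map. -/
noncomputable def singLM (k : ℕ) : X →ₗ[ℝ] lp (fun _ : ℕ => X) p where
  toFun a := lp.single p k a
  map_add' a b := by
    apply lp.ext; funext j
    rw [lp.coeFn_add, Pi.add_apply, single_apply_ite, single_apply_ite, single_apply_ite]
    by_cases h : j = k <;> simp [h]
  map_smul' c a := by
    simp only [RingHom.id_apply]
    exact lp.single_smul (E := fun _ : ℕ => X) p k c a

@[simp] lemma singLM_apply (k : ℕ) (a : X) : singLM p k a = lp.single p k a := rfl

lemma coord_sing (j k : ℕ) (a : X) :
    coordCLM p j (singLM p k a) = if j = k then a else 0 := single_apply_ite p k a j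

lemma norm_singLM_le (k : ℕ) (a : X) : ‖singLM p k a‖ ≤ ‖a‖ := by
  rcases eq_or_ne p ∞ with hp | hp
  · subst hp
    refine lp.norm_le_of_forall_le (norm_nonneg a) fun j => ?_
    rw [singLM_apply]
    rw [show ((lp.single ∞ k a : lp (fun _ : ℕ => X) ∞) : ℕ → X) j
        = if j = k then a else 0 from single_apply_ite ∞ k a j]
    by_cases h : j = k <;> simp [h]
  · have hptr : 0 < p.toReal := ENNReal.toReal_pos (hp0 p) hp
    rw [singLM_apply]
    rw [show a = (fun _ : ℕ => a) k from rfl]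
    rw [lp.norm_single (pos_iff_ne_zero.mpr (hp0 p)) k]

lemma coord_inj (x y : lp (fun _ : ℕ => X) p)
    (h : ∀ k, coordCLM p k x = coordCLM p k y) : x = y :=
  lp.ext (funext h)

lemma lp_dense (hp : p ≠ ∞) (u : lp (fun _ : ℕ => X) p) (ε : ℝ) (hε : 0 < ε) :
    ∃ s : Finset ℕ, ‖u - ∑ k ∈ s, singLM p k (coordCLM p k u)‖ < ε := by
  have h := lp.hasSum_single hp u
  have h2 := Metric.tendsto_nhds.mp h ε hε
  obtain ⟨s, hs⟩ := h2.exists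
  refine ⟨s, ?_⟩
  rw [norm_sub_rev]
  simpa [dist_eq_norm] using hs

end LpInst

section C0Inst
variable {X : Type*} [NormedAddCommGroup X] [NormedSpace ℝ X]

/-- coordinate functional on the c0 sum. -/
noncomputable def coordC0 (k : ℕ) : (c0Sum (fun _ : ℕ => X)) →L[ℝ] X :=
  (coordCLM ∞ k).comp (c0Sum (fun _ : ℕ => X)).subtypeL

@[simp] lemma coordC0_apply (k : ℕ) (x : c0Sum (fun _ : ℕ => X)) :
    coordC0 k x = ((x : lp (fun _ : ℕ => X) ∞) : ℕ → X) k := rfl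

lemma norm_c0_coe (x : c0Sum (fun _ : ℕ => X)) : ‖x‖ = ‖(x : lp (fun _ : ℕ => X) ∞)‖ := rfl

lemma coordC0_le (k : ℕ) (x : c0Sum (fun _ : ℕ => X)) : ‖coordC0 k x‖ ≤ ‖x‖ := by
  rw [coordC0_apply, norm_c0_coe]
  exact lp.norm_apply_le_norm ENNReal.top_ne_zero _ k

lemma single_mem_c0 (k : ℕ) (a : X) :
    (lp.single ∞ k a : lp (fun _ : ℕ => X) ∞) ∈ c0Sum (fun _ : ℕ => X) := by
  have h0 : ∀ᶠ j in (cofinite : Filter ℕ),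
      ‖((lp.single ∞ k a : lp (fun _ : ℕ => X) ∞) : ℕ → X) j‖ = 0 := by
    have hfin : ({k} : Set ℕ).Finite := Set.finite_singleton k
    filter_upwards [hfin.eventually_cofinite_notMem] with j hj
    rw [single_apply_ite, if_neg (by simpa using hj), norm_zero]
  show Tendsto _ cofinite (nhds 0)
  exact tendsto_const_nhds.congr' (by filter_upwards [h0] with j hj using hj.symm)

/-- single as a linear map into the c0 sum. -/
noncomputable def singC0 (k : ℕ) : X →ₗ[ℝ] (c0Sum (fun _ : ℕ => X)) where
  toFun a := ⟨lp.single ∞ k a, single_mem_c0 k a⟩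
  map_add' a b := Subtype.ext ((singLM ∞ (X := X) k).map_add a b)
  map_smul' c a := Subtype.ext ((singLM ∞ (X := X) k).map_smul c a)

@[simp] lemma singC0_coe (k : ℕ) (a : X) :
    ((singC0 k a : c0Sum (fun _ : ℕ => X)) : lp (fun _ : ℕ => X) ∞) = lp.single ∞ k a := rfl

lemma norm_singC0_le (k : ℕ) (a : X) : ‖singC0 k a‖ ≤ ‖a‖ := by
  rw [norm_c0_coe, singC0_coe]
  exact norm_singLM_le ∞ k a

lemma coordC0_sing (j k : ℕ) (a : X) :
    coordC0 j (singC0 k a) = if j = k then a else 0 := by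
  rw [coordC0_apply, singC0_coe]
  exact single_apply_ite ∞ k a j

lemma coordC0_inj (x y : c0Sum (fun _ : ℕ => X))
    (h : ∀ k, coordC0 k x = coordC0 k y) : x = y :=
  Subtype.ext (lp.ext (funext h))

lemma c0_dense (u : c0Sum (fun _ : ℕ => X)) (ε : ℝ) (hε : 0 < ε) :
    ∃ s : Finset ℕ, ‖u - ∑ k ∈ s, singC0 k (coordC0 k u)‖ < ε := by
  have hu : Tendsto (fun i => ‖((u : lp (fun _ : ℕ => X) ∞) : ℕ → X) i‖)
      cofinite (nhds 0) := u.2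
  have hev : ∀ᶠ i in (cofinite : Filter ℕ),
      ‖((u : lp (fun _ : ℕ => X) ∞) : ℕ → X) i‖ < ε / 2 :=
    hu.eventually (eventually_lt_nhds (half_pos hε))
  rw [Filter.eventually_cofinite] at hev
  refine ⟨hev.toFinset, ?_⟩
  have hle : ‖u - ∑ k ∈ hev.toFinset, singC0 k (coordC0 k u)‖ ≤ ε / 2 := by
    rw [norm_c0_coe]
    have hco : ((↑(u - ∑ k ∈ hev.toFinset, singC0 k (coordC0 k u)) :
        lp (fun _ : ℕ => X) ∞)) = (u : lp (fun _ : ℕ => X) ∞)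
          - ∑ k ∈ hev.toFinset, lp.single ∞ k (((u : lp (fun _ : ℕ => X) ∞) : ℕ → X) k) := by
      push_cast
      rfl
    rw [hco]
    refine lp.norm_le_of_forall_le (by positivity) fun j => ?_
    have hj : (((u : lp (fun _ : ℕ => X) ∞)
        - ∑ k ∈ hev.toFinset, lp.single ∞ k (((u : lp (fun _ : ℕ => X) ∞) : ℕ → X) k) :
          lp (fun _ : ℕ => X) ∞) : ℕ → X) j
        = ((u : lp (fun _ : ℕ => X) ∞) : ℕ → X) j
          - (if j ∈ hev.toFinset then ((u : lp (fun _ : ℕ => X) ∞) : ℕ → X) j else 0) := by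
      rw [lp.coeFn_sub, Pi.sub_apply]
      congr 1
      rw [lp.coeFn_sum, Finset.sum_apply]
      rw [Finset.sum_congr rfl fun k _ => single_apply_ite ∞ k _ j, Finset.sum_ite_eq]
    rw [hj]
    by_cases hjs : j ∈ hev.toFinset
    · rw [if_pos hjs, sub_self, norm_zero]; positivity
    · rw [if_neg hjs, sub_zero]
      have := by simpa using hjs
      simp only [Set.Finite.mem_toFinset, Set.mem_setOf_eq, not_not] at hjs
      exact le_of_lt hjs
  linarith

end C0Inst


end Helpers

/-- the unilateral shift `B_T` on `ℓ^p(X,ℕ)` (or `c₀(X,ℕ)`) is mixing iff for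
every non-empty open `U ⊆ X` the set `N_T(B_X(0,1),U)` is cofinite; in particular if `T` is
mixing then so is `B_T`. -/
theorem stmt_8 {X : Type*} [NormedAddCommGroup X] [NormedSpace ℝ X] [CompleteSpace X]
    (T : X →L[ℝ] X) (p : ℝ≥0∞) [Fact (1 ≤ p)] (hp : p ≠ ∞) :
    (∀ B : lp (fun _ : ℕ => X) p →L[ℝ] lp (fun _ : ℕ => X) p,
      (∀ (x : lp (fun _ : ℕ => X) p) (k : ℕ),
        (B x : ℕ → X) k = T ((x : ℕ → X) (k + 1))) →
      ((TopologicallyMixing ⇑B ↔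
          ∀ U : Set X, IsOpen U → U.Nonempty →
            {n : ℕ | ¬ ((⇑T)^[n] '' Metric.ball (0 : X) 1 ∩ U).Nonempty}.Finite)
        ∧ (TopologicallyMixing ⇑T → TopologicallyMixing ⇑B)))
    ∧ (∀ B : c0Sum (fun _ : ℕ => X) →L[ℝ] c0Sum (fun _ : ℕ => X),
      (∀ (x : c0Sum (fun _ : ℕ => X)) (k : ℕ),
        ((B x : lp (fun _ : ℕ => X) ∞) : ℕ → X) k
          = T (((x : lp (fun _ : ℕ => X) ∞) : ℕ → X) (k + 1))) →
      ((TopologicallyMixing ⇑B ↔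
          ∀ U : Set X, IsOpen U → U.Nonempty →
            {n : ℕ | ¬ ((⇑T)^[n] '' Metric.ball (0 : X) 1 ∩ U).Nonempty}.Finite)
        ∧ (TopologicallyMixing ⇑T → TopologicallyMixing ⇑B))) := by
  constructor
  · intro B hBprop
    have hkey := key T (coordCLM p)
      (fun k x => by simpa using lp.norm_apply_le_norm (hp0 p) x k)
      (singLM p) (norm_singLM_le p) (coord_sing p) (coord_inj p) (lp_dense p hp) ⇑B
      (fun x k => by rw [coordCLM_apply, coordCLM_apply, hBprop x k])
    exact ⟨hkey, fun hT => hkey.mpr (mixing_cond T hT)⟩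
  · intro B hBprop
    have hkey := key T coordC0 coordC0_le singC0 norm_singC0_le coordC0_sing
      coordC0_inj c0_dense ⇑B
      (fun x k => by rw [coordC0_apply, coordC0_apply, hBprop x k])
    exact ⟨hkey, fun hT => hkey.mpr (mixing_cond T hT)⟩
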